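/- In the ε-BMC update, if e_U ≤ e_Q and the previous mean m' ∈ [0,1], then the new mean satisfies m = m'·r/(r+1) · (e_U·(m'r+1) + e_Q·(1-m')r)/((e_U·m' + e_Q·(1-m'))·r) ≤ m', for any r > 0. -/
import Mathlib


theorem stmt5 (m' r eU eQ : ℝ) (hm : m' ∈ Set.Icc (0:ℝ) 1) (hr : 0 < r)
    (heU : 0 < eU) (heQ : 0 < eQ) (h : eU ≤ eQ) :
    m' * r / (r + 1) *
        ((eU * (m' * r + 1) + eQ * ((1 - m') * r)) / ((eU * m' + eQ * (1 - m')) * r)) ≤ m' := by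
  obtain ⟨hm0, hm1⟩ := hm
  have hD : 0 < eU * m' + eQ * (1 - m') := by nlinarith
  rw [div_mul_div_comm, div_le_iff₀ (by positivity)]
  nlinarith [mul_nonneg hm0 (sub_nonneg.2 h), mul_nonneg (mul_nonneg hm0 (sub_nonneg.2 h)) hr.le,
    mul_nonneg (mul_nonneg hm0 (sub_nonneg.2 hm1)) (mul_nonneg (sub_nonneg.2 h) hr.le)]
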